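/- If all vectors f(x_i), f(x_i^+) are unit vectors, the InfoNCE loss is lower bounded by ∑_{i=1}^m ( log(m-1) + ‖f(x_i)-f(x_i^+)‖²/(2τ) - (1/(m-1)) ∑_{j≠i} ‖f(x_i)-f(x_j^+)‖²/(2τ) ). -/

import Mathlib

theorem stmt_3 {m Z : ℕ} (hm : 2 ≤ m) {τ : ℝ} (hτ : 0 < τ)
    (f g : Fin m → EuclideanSpace ℝ (Fin Z))
    (hf : ∀ i, ‖f i‖ = 1) (hg : ∀ i, ‖g i‖ = 1) :
    -∑ i, Real.log (Real.exp ((inner ℝ (f i) (g i) : ℝ) / τ) /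
        ∑ j ∈ Finset.univ \ {i}, Real.exp ((inner ℝ (f i) (g j) : ℝ) / τ)) ≥
      ∑ i, (Real.log ((m : ℝ) - 1) + ‖f i - g i‖ ^ 2 / (2 * τ) -
        (1 / ((m : ℝ) - 1)) *
          ∑ j ∈ Finset.univ \ {i}, ‖f i - g j‖ ^ 2 / (2 * τ)) := by
  rw [← Finset.sum_neg_distrib]
  apply Finset.sum_le_sum
  intro i _
  set T : Finset (Fin m) := Finset.univ \ {i} with hT
  have hcard : (T.card : ℝ) = (m : ℝ) - 1 := by
    have : T.card = m - 1 := by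
      simp [hT, Finset.card_sdiff_of_subset (Finset.subset_univ _)]
    rw [this, Nat.cast_sub (by omega)]; simp
  have hm1 : (0:ℝ) < (m : ℝ) - 1 := by
    have : (2:ℝ) ≤ (m:ℝ) := by exact_mod_cast hm
    linarith
  have hTne : T.Nonempty := by
    rw [← Finset.card_pos]
    have : (0:ℝ) < (T.card : ℝ) := by rw [hcard]; exact hm1
    exact_mod_cast this
  set b : Fin m → ℝ := fun j => (inner ℝ (f i) (g j) : ℝ) / τ with hb
  set S : ℝ := ∑ j ∈ T, Real.exp (b j) with hS
  have hSpos : 0 < S := Finset.sum_pos (fun j _ => Real.exp_pos _) hTne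
  -- Jensen
  have hjensen : Real.exp (∑ j ∈ T, (((m:ℝ)-1)⁻¹) • b j) ≤
      ∑ j ∈ T, (((m:ℝ)-1)⁻¹) • Real.exp (b j) := by
    have := convexOn_exp.map_sum_le (t := T) (w := fun _ => ((m:ℝ)-1)⁻¹) (p := b)
      (fun j _ => by positivity) (by
        rw [Finset.sum_const, nsmul_eq_mul, hcard, mul_inv_cancel₀ (ne_of_gt hm1)])
      (fun j _ => Set.mem_univ _)
    simpa using this
  have hlog : Real.log ((m:ℝ)-1) + (((m:ℝ)-1)⁻¹) * ∑ j ∈ T, b j ≤ Real.log S := by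
    have h1 : (((m:ℝ)-1)⁻¹) * ∑ j ∈ T, b j ≤ Real.log ((((m:ℝ)-1)⁻¹) * S) := by
      rw [← Real.log_exp ((((m:ℝ)-1)⁻¹) * ∑ j ∈ T, b j)]
      apply Real.log_le_log (Real.exp_pos _)
      calc Real.exp ((((m:ℝ)-1)⁻¹) * ∑ j ∈ T, b j)
          = Real.exp (∑ j ∈ T, (((m:ℝ)-1)⁻¹) • b j) := by
            simp [Finset.mul_sum, smul_eq_mul]
        _ ≤ ∑ j ∈ T, (((m:ℝ)-1)⁻¹) • Real.exp (b j) := hjensen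
        _ = (((m:ℝ)-1)⁻¹) * S := by simp [hS, Finset.mul_sum, smul_eq_mul]
    rw [Real.log_mul (by positivity) (ne_of_gt hSpos), Real.log_inv] at h1
    linarith
  -- rewrite the LHS
  have hquot : -Real.log (Real.exp (b i) / S) = Real.log S - b i := by
    rw [Real.log_div (ne_of_gt (Real.exp_pos _)) (ne_of_gt hSpos), Real.log_exp]
    ring
  rw [hquot]
  -- norm identities
  have hnorm : ∀ j, ‖f i - g j‖ ^ 2 / (2 * τ) = 1/τ - b j := by
    intro j
    have : ‖f i - g j‖ ^ 2 = ‖f i‖ ^ 2 - 2 * (inner ℝ (f i) (g j) : ℝ) + ‖g j‖ ^ 2 :=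
      norm_sub_sq_real _ _
    rw [this, hf, hg, hb]
    field_simp
    ring
  have hsum : ∑ j ∈ T, ‖f i - g j‖ ^ 2 / (2 * τ) = ((m:ℝ)-1) * (1/τ) - ∑ j ∈ T, b j := by
    simp only [hnorm, Finset.sum_sub_distrib, Finset.sum_const, nsmul_eq_mul, hcard]
  rw [hsum, hnorm i]
  have expand : Real.log ((m:ℝ)-1) + (1/τ - b i) -
      1/((m:ℝ)-1) * (((m:ℝ)-1) * (1/τ) - ∑ j ∈ T, b j)
      = Real.log ((m:ℝ)-1) + (((m:ℝ)-1)⁻¹) * ∑ j ∈ T, b j - b i := by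
    field_simp
    ring
  rw [expand]
  linarith
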